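/- Let φ: ℂ → ℂ be holomorphic near y₀ with φ'(y₀) ≠ 0. Then for the function F(x,y) = φ'(y)/(φ(x) − φ(y)) defined for x ≠ y near y₀, the difference F(x,y) − 1/(x−y) extends holomorphically across the diagonal, and its value on the diagonal is −(1/2)·φ''(y)/φ'(y). -/

import Mathlib

open Finset Finset.Nat
open scoped NNReal ENNReal

namespace Statement19

/-- Monomial multilinear map on `ℂ × ℂ`. -/
noncomputable def mono (n i : ℕ) : ContinuousMultilinearMap ℂ (fun _ : Fin n => ℂ × ℂ) ℂ :=
  (ContinuousMultilinearMap.mkPiAlgebra ℂ (Fin n) ℂ).compContinuousLinearMap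
    (fun k => if (k : ℕ) < i then ContinuousLinearMap.fst ℂ ℂ ℂ else ContinuousLinearMap.snd ℂ ℂ ℂ)

lemma mono_norm_le (n i : ℕ) : ‖mono n i‖ ≤ 1 := by
  refine (ContinuousMultilinearMap.norm_compContinuousLinearMap_le _ _).trans ?_
  rw [ContinuousMultilinearMap.norm_mkPiAlgebra, one_mul]
  refine Finset.prod_le_one (fun k _ => norm_nonneg _) (fun k _ => ?_)
  split
  · exact ContinuousLinearMap.norm_fst_le ..
  · exact ContinuousLinearMap.norm_snd_le ..

lemma mono_apply {n i : ℕ} (h : i ≤ n) (u v : ℂ) :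
    (mono n i fun _ => (u, v)) = u ^ i * v ^ (n - i) := by
  rw [mono, ContinuousMultilinearMap.compContinuousLinearMap_apply,
    ContinuousMultilinearMap.mkPiAlgebra_apply]
  have e : ∀ k : Fin n,
      (if (k : ℕ) < i then ContinuousLinearMap.fst ℂ ℂ ℂ else ContinuousLinearMap.snd ℂ ℂ ℂ) (u, v)
        = if (k : ℕ) < i then u else v := by
    intro k; split <;> rfl
  simp only [e]
  rw [Fin.prod_univ_eq_prod_range (fun k => if k < i then u else v) n, Finset.prod_ite,
    Finset.prod_const, Finset.prod_const]
  have h1 : (Finset.range n).filter (fun k => k < i) = Finset.range i := by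
    ext k; simp only [Finset.mem_filter, Finset.mem_range]; omega
  have h2 : (Finset.range n).filter (fun k => ¬ k < i) = Finset.Ico i n := by
    ext k; simp only [Finset.mem_filter, Finset.mem_range, Finset.mem_Ico]; omega
  rw [h1, h2, Finset.card_range, Nat.card_Ico]

/-- The formal power series on `ℂ × ℂ` with coefficients `b i j` on `u^i v^j`. -/
noncomputable def ser (b : ℕ → ℕ → ℂ) : FormalMultilinearSeries ℂ (ℂ × ℂ) ℂ :=
  fun n => ∑ p ∈ antidiagonal n, b p.1 p.2 • mono n p.1

lemma ser_norm_le (b : ℕ → ℕ → ℂ) (n : ℕ) :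
    ‖ser b n‖ ≤ ∑ p ∈ antidiagonal n, ‖b p.1 p.2‖ := by
  refine (norm_sum_le _ _).trans (Finset.sum_le_sum fun p _ => ?_)
  refine le_trans (ContinuousMultilinearMap.opNorm_smul_le _ _) ?_
  calc ‖b p.1 p.2‖ * ‖mono n p.1‖ ≤ ‖b p.1 p.2‖ * 1 := by
        gcongr; exact mono_norm_le _ _
    _ = ‖b p.1 p.2‖ := mul_one _

lemma ser_apply (b : ℕ → ℕ → ℂ) (n : ℕ) (u v : ℂ) :
    (ser b n fun _ => (u, v)) = ∑ p ∈ antidiagonal n, b p.1 p.2 * u ^ p.1 * v ^ p.2 := by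
  rw [ser, ContinuousMultilinearMap.sum_apply]
  refine Finset.sum_congr rfl fun p hp => ?_
  have h := mem_antidiagonal.mp hp
  rw [ContinuousMultilinearMap.smul_apply, mono_apply (Nat.le.intro h) u v, smul_eq_mul]
  have : n - p.1 = p.2 := by omega
  rw [this, mul_assoc]

lemma mem_ball_iff {r' : ℝ≥0} {u v : ℂ} :
    (u, v) ∈ EMetric.ball (0 : ℂ × ℂ) (r' : ℝ≥0∞) ↔ ‖u‖ < r' ∧ ‖v‖ < r' := by
  rw [EMetric.ball, mem_emetric_ball_zero_iff, enorm_eq_nnnorm, ENNReal.coe_lt_coe, ← NNReal.coe_lt_coe, coe_nnnorm,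
    Prod.norm_def, max_lt_iff]

lemma exists_sum (b : ℕ → ℕ → ℂ) (r' : ℝ≥0) (hr : 0 < r')
    (hs : Summable fun n => (∑ p ∈ antidiagonal n, ‖b p.1 p.2‖) * (r' : ℝ) ^ n) :
    ∃ F : ℂ × ℂ → ℂ, AnalyticOnNhd ℂ F (EMetric.ball (0 : ℂ × ℂ) (r' : ℝ≥0∞)) ∧
      ∀ u v : ℂ, (u, v) ∈ EMetric.ball (0 : ℂ × ℂ) (r' : ℝ≥0∞) →
        HasSum (fun n => ∑ p ∈ antidiagonal n, b p.1 p.2 * u ^ p.1 * v ^ p.2) (F (u, v)) := by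
  have hrad : (r' : ℝ≥0∞) ≤ (ser b).radius := by
    apply FormalMultilinearSeries.le_radius_of_summable_norm
    refine hs.of_nonneg_of_le (fun n => by positivity) (fun n => ?_)
    exact mul_le_mul_of_nonneg_right (ser_norm_le b n) (by positivity)
  have hpos : 0 < (ser b).radius := lt_of_lt_of_le (ENNReal.coe_pos.mpr hr) hrad
  refine ⟨(ser b).sum, ((ser b).hasFPowerSeriesOnBall hpos).analyticOnNhd.mono
    (EMetric.ball_subset_ball hrad), fun u v hm => ?_⟩
  have := (ser b).hasSum (EMetric.ball_subset_ball hrad hm)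
  simpa only [ser_apply] using this

/-! ### Polynomial identities -/

/-- `S u v n = ∑_{i+j=n} u^i v^j`. -/
noncomputable def S (u v : ℂ) (n : ℕ) : ℂ := ∑ p ∈ antidiagonal n, u ^ p.1 * v ^ p.2

/-- `T u v n = ∑_{i+j=n} (j+1) u^i v^j`. -/
noncomputable def T (u v : ℂ) (n : ℕ) : ℂ :=
  ∑ p ∈ antidiagonal n, ((p.2 : ℂ) + 1) * u ^ p.1 * v ^ p.2

lemma S_zero (u v : ℂ) : S u v 0 = 1 := by simp [S]

lemma T_zero (u v : ℂ) : T u v 0 = 1 := by simp [T]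

lemma S_mul (u v : ℂ) (n : ℕ) : S u v n * (u - v) = u ^ (n + 1) - v ^ (n + 1) := by
  rw [S, sum_antidiagonal_eq_sum_range_succ (fun i j => u ^ i * v ^ j)]
  have := geom_sum₂_mul u v (n + 1)
  simpa using this

lemma S_succ (u v : ℂ) (n : ℕ) : S u v (n + 1) = v ^ (n + 1) + u * S u v n := by
  simp only [S]
  rw [sum_antidiagonal_succ, Finset.mul_sum]
  simp only [pow_zero, one_mul]
  congr 1
  exact Finset.sum_congr rfl fun p _ => by ring

lemma T_succ (u v : ℂ) (n : ℕ) :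
    T u v (n + 1) = ((n : ℂ) + 2) * v ^ (n + 1) + u * T u v n := by
  simp only [T]
  rw [sum_antidiagonal_succ, Finset.mul_sum]
  congr 1
  · push_cast; ring
  · exact Finset.sum_congr rfl fun p _ => by push_cast; ring

lemma S_diag (v : ℂ) (n : ℕ) : S v v n = ((n : ℂ) + 1) * v ^ n := by
  rw [S]
  have e : ∀ p ∈ antidiagonal n, v ^ p.1 * v ^ p.2 = v ^ n := fun p hp => by
    rw [← pow_add, mem_antidiagonal.mp hp]
  rw [Finset.sum_congr rfl e, Finset.sum_const, card_antidiagonal, nsmul_eq_mul]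
  push_cast; ring

lemma S_swap (u v : ℂ) (n : ℕ) : S u v n = S v u n := by
  rw [S, S, ← Finset.Nat.sum_antidiagonal_swap (f := fun p => v ^ p.1 * u ^ p.2)]
  exact Finset.sum_congr rfl fun p _ => by simp [Prod.swap]; ring

lemma S_key (u v : ℂ) (n : ℕ) :
    S u v (n + 1) = ((n : ℂ) + 2) * v ^ (n + 1) + (u - v) * T u v n := by
  induction n with
  | zero => simp [S_succ, S_zero, T_zero]; ring
  | succ n ih =>
      rw [S_succ, ih, T_succ]
      push_cast
      ring

end Statement19
set_option maxHeartbeats 2000000 in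
open Finset Finset.Nat Statement19 in
/-- Let `φ : ℂ → ℂ` be holomorphic near `y₀` with `φ'(y₀) ≠ 0`.  Then for
`F(x,y) = φ'(y)/(φ(x) − φ(y))` (defined for `x ≠ y` near `y₀`), the difference
`F(x,y) − 1/(x−y)` extends holomorphically across the diagonal, and its value on the
diagonal is `−(1/2)·φ''(y)/φ'(y)`. -/
theorem statement19 (φ : ℂ → ℂ) (y₀ : ℂ)
    (hφ : AnalyticAt ℂ φ y₀) (hφ' : deriv φ y₀ ≠ 0) :
    ∃ (U : Set (ℂ × ℂ)) (G : ℂ × ℂ → ℂ),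
      U ∈ nhds (y₀, y₀) ∧
      (∀ z ∈ U, AnalyticAt ℂ G z) ∧
      (∀ z ∈ U, z.1 ≠ z.2 →
        G z = deriv φ z.2 / (φ z.1 - φ z.2) - 1 / (z.1 - z.2)) ∧
      (∀ y : ℂ, ((y, y) : ℂ × ℂ) ∈ U →
        G (y, y) = -(deriv (deriv φ) y) / (2 * deriv φ y)) := by
  obtain ⟨p, r, hp⟩ := hφ
  obtain ⟨s, hs0, hsr⟩ := ENNReal.lt_iff_exists_nnreal_btwn.mp hp.r_pos
  obtain ⟨r', hr'0, hr's⟩ := ENNReal.lt_iff_exists_nnreal_btwn.mp hs0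
  have hr'0' : 0 < r' := by exact_mod_cast hr'0
  have hr'0R : (0:ℝ) < r' := hr'0'
  have hs0' : (0:ℝ) < s := by exact_mod_cast hs0
  have hr'r : (r' : ℝ≥0∞) < r := hr's.trans hsr
  have hrs : (r' : ℝ) < s := by exact_mod_cast hr's
  have hx1 : (r' : ℝ) / s < 1 := (div_lt_one hs0').mpr hrs
  have hx0 : (0:ℝ) ≤ (r':ℝ)/s := by positivity
  obtain ⟨C, hC0, hC⟩ := p.norm_mul_pow_le_of_lt_radius (hsr.trans_le hp.r_le)
  set a : ℕ → ℂ := fun n => p.coeff n with ha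
  have ha_le : ∀ n, ‖a n‖ ≤ C / s ^ n := by
    intro n
    have h1 : ‖a n‖ ≤ ‖p n‖ := by
      have e : a n = p n (fun _ => (1:ℂ)) := rfl
      rw [e]
      refine ((p n).le_opNorm _).trans ?_
      simp
    rw [le_div_iff₀ (by positivity)]
    exact le_trans (mul_le_mul_of_nonneg_right h1 (by positivity)) (hC n)
  have hxn : ‖(r':ℝ)/s‖ < 1 := by rwa [Real.norm_eq_abs, abs_of_nonneg hx0]
  have hg0 : Summable fun n : ℕ => ((r':ℝ)/s) ^ n := summable_geometric_of_lt_one hx0 hx1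
  have hg1 : Summable fun n : ℕ => ((n:ℝ)+1) * ((r':ℝ)/s) ^ n := by
    refine ((summable_pow_mul_geometric_of_norm_lt_one 1 hxn).add hg0).congr fun n => ?_
    push_cast; ring
  have hg2 : Summable fun n : ℕ => ((n:ℝ)+1)^2 * ((r':ℝ)/s) ^ n := by
    refine (((summable_pow_mul_geometric_of_norm_lt_one 2 hxn).add
      ((summable_pow_mul_geometric_of_norm_lt_one 1 hxn).mul_left 2)).add hg0).congr fun n => ?_
    push_cast; ring
  -- the function H
  have hsH : Summable fun n =>
      (∑ q ∈ antidiagonal n, ‖(fun (i j : ℕ) => a (i + j + 1)) q.1 q.2‖) * (r' : ℝ) ^ n := by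
    refine Summable.of_nonneg_of_le (fun n => by positivity) (fun n => ?_)
      (hg1.mul_left (C/s))
    have e1 : ∑ q ∈ antidiagonal n, ‖a (q.1 + q.2 + 1)‖ = ((n:ℝ)+1) * ‖a (n+1)‖ := by
      have e : ∀ q ∈ antidiagonal n, ‖a (q.1 + q.2 + 1)‖ = ‖a (n+1)‖ := fun q hq => by
        rw [mem_antidiagonal.mp hq]
      rw [Finset.sum_congr rfl e, Finset.sum_const, card_antidiagonal, nsmul_eq_mul]
      push_cast; ring
    rw [e1]
    calc ((n:ℝ)+1) * ‖a (n+1)‖ * (r':ℝ)^n ≤ ((n:ℝ)+1) * (C / s^(n+1)) * (r':ℝ)^n := by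
          gcongr; exact ha_le _
      _ = C / s * (((n:ℝ)+1) * ((r':ℝ)/s)^n) := by
          rw [div_pow]; field_simp; ring
  obtain ⟨H, HanH, hHsum⟩ := exists_sum (fun (i j : ℕ) => a (i + j + 1)) r' hr'0' hsH
  have hH : ∀ u v : ℂ, (u, v) ∈ EMetric.ball (0 : ℂ × ℂ) (r' : ℝ≥0∞) →
      HasSum (fun n => a (n+1) * S u v n) (H (u, v)) := by
    intro u v hm
    have e : (fun n => ∑ q ∈ antidiagonal n, (fun (i j : ℕ) => a (i + j + 1)) q.1 q.2 * u ^ q.1 * v ^ q.2)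
        = fun n => a (n+1) * S u v n := by
      funext n
      simp only [S, Finset.mul_sum]
      refine Finset.sum_congr rfl fun q hq => ?_
      rw [mem_antidiagonal.mp hq, mul_assoc]
    have := hHsum u v hm
    rwa [e] at this
  -- the function K
  have hsK : Summable fun n =>
      (∑ q ∈ antidiagonal n, ‖(fun (i j : ℕ) => -(((j:ℂ)+1) * a (i + j + 2))) q.1 q.2‖) * (r' : ℝ) ^ n := by
    refine Summable.of_nonneg_of_le (fun n => by positivity) (fun n => ?_)
      (hg2.mul_left (C/s^2))
    have e1 : ∑ q ∈ antidiagonal n, ‖-(((q.2:ℂ)+1) * a (q.1 + q.2 + 2))‖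
        ≤ ((n:ℝ)+1)^2 * ‖a (n+2)‖ := by
      have e : ∀ q ∈ antidiagonal n, ‖-(((q.2:ℂ)+1) * a (q.1 + q.2 + 2))‖
          ≤ ((n:ℝ)+1) * ‖a (n+2)‖ := by
        intro q hq
        have h := mem_antidiagonal.mp hq
        rw [norm_neg, norm_mul, h]
        gcongr
        have : ‖((q.2:ℂ)+1)‖ = (q.2:ℝ) + 1 := by
          rw [show ((q.2:ℂ)+1) = ((q.2+1 : ℕ) : ℂ) by push_cast; ring, Complex.norm_natCast]
          push_cast; ring
        rw [this]
        have : q.2 ≤ n := by omega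
        exact_mod_cast Nat.succ_le_succ this
      calc ∑ q ∈ antidiagonal n, ‖-(((q.2:ℂ)+1) * a (q.1 + q.2 + 2))‖
          ≤ ∑ _q ∈ antidiagonal n, ((n:ℝ)+1) * ‖a (n+2)‖ := Finset.sum_le_sum e
        _ = ((n:ℝ)+1)^2 * ‖a (n+2)‖ := by
            rw [Finset.sum_const, card_antidiagonal, nsmul_eq_mul]; push_cast; ring
    calc (∑ q ∈ antidiagonal n, ‖-(((q.2:ℂ)+1) * a (q.1 + q.2 + 2))‖) * (r':ℝ)^n
        ≤ (((n:ℝ)+1)^2 * ‖a (n+2)‖) * (r':ℝ)^n := by gcongr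
      _ ≤ (((n:ℝ)+1)^2 * (C / s^(n+2))) * (r':ℝ)^n := by gcongr; exact ha_le _
      _ = C / s^2 * (((n:ℝ)+1)^2 * ((r':ℝ)/s)^n) := by
          rw [div_pow]; field_simp; ring
  obtain ⟨K, HanK, hKsum⟩ := exists_sum (fun (i j : ℕ) => -(((j:ℂ)+1) * a (i + j + 2))) r' hr'0' hsK
  have hK : ∀ u v : ℂ, (u, v) ∈ EMetric.ball (0 : ℂ × ℂ) (r' : ℝ≥0∞) →
      HasSum (fun n => (u - v) * -(a (n+2) * T u v n)) ((u - v) * K (u, v)) := by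
    intro u v hm
    have e : (fun n => ∑ q ∈ antidiagonal n,
        (fun (i j : ℕ) => -(((j:ℂ)+1) * a (i + j + 2))) q.1 q.2 * u ^ q.1 * v ^ q.2)
        = fun n => -(a (n+2) * T u v n) := by
      funext n
      simp only [T, Finset.mul_sum, ← Finset.sum_neg_distrib]
      refine Finset.sum_congr rfl fun q hq => ?_
      rw [mem_antidiagonal.mp hq]
      ring
    have := (hKsum u v hm)
    rw [e] at this
    exact this.mul_left (u - v)
  -- basic identities
  have hφsum : ∀ w : ℂ, ‖w‖ < r' → HasSum (fun n => a n * w ^ n) (φ (y₀ + w)) := by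
    intro w hw
    have hball : w ∈ EMetric.ball (0:ℂ) r := by
      rw [EMetric.ball, mem_emetric_ball_zero_iff]
      refine lt_trans ?_ hr'r
      exact_mod_cast hw
    have e : (fun n => p n fun _ => w) = fun n => a n * w ^ n := funext fun n => by
      rw [FormalMultilinearSeries.apply_eq_pow_smul_coeff, smul_eq_mul, mul_comm]
    have := hp.hasSum hball
    rwa [e] at this
  have h1 : ∀ u v : ℂ, ‖u‖ < r' → ‖v‖ < r' →
      (u - v) * H (u, v) = φ (y₀ + u) - φ (y₀ + v) := by
    intro u v hu hv
    have hL := (hH u v (mem_ball_iff.mpr ⟨hu, hv⟩)).mul_left (u - v)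
    have eL : (fun n => (u - v) * (a (n+1) * S u v n))
        = fun n => a (n+1) * u^(n+1) - a (n+1) * v^(n+1) := funext fun n => by
      rw [show a (n+1) * u^(n+1) - a (n+1) * v^(n+1) = a (n+1) * (u^(n+1) - v^(n+1)) by ring,
        ← S_mul u v n]; ring
    rw [eL] at hL
    have hd := (hφsum u hu).sub (hφsum v hv)
    have hshift : HasSum (fun n => a (n+1) * u^(n+1) - a (n+1) * v^(n+1))
        (φ (y₀ + u) - φ (y₀ + v)) := by
      refine (hasSum_nat_add_iff (f := fun n => a n * u^n - a n * v^n) 1).mpr ?_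
      simpa using hd
    exact hL.unique hshift
  have h3 : ∀ v : ℂ, ‖v‖ < r' → deriv φ (y₀ + v) = H (v, v) := by
    intro v hv
    have hmem : y₀ + v ∈ Metric.ball y₀ (r' : ℝ) := by
      simp only [Metric.mem_ball, dist_eq_norm, add_sub_cancel_left]; exact hv
    have hvv := mem_ball_iff.mpr ⟨hv, hv⟩
    have hdiffH : DifferentiableAt ℂ (fun x : ℂ => H (x - y₀, v)) (y₀ + v) := by
      have h := (HanH (v, v) hvv).differentiableAt
      have h' : DifferentiableAt ℂ H ((y₀ + v) - y₀, v) := by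
        rwa [add_sub_cancel_left]
      exact DifferentiableAt.comp (g := H) (f := fun x : ℂ => (x - y₀, v)) _ h'
        ((differentiableAt_id.sub_const y₀).prodMk (differentiableAt_const v))
    have hg : HasDerivAt (fun x : ℂ => φ (y₀ + v) + (x - (y₀ + v)) * H (x - y₀, v))
        (H (v, v)) (y₀ + v) := by
      have h2 : HasDerivAt (fun x : ℂ => (x - (y₀ + v)) * H (x - y₀, v))
          (1 * H ((y₀ + v) - y₀, v)
            + ((y₀ + v) - (y₀ + v)) * deriv (fun x => H (x - y₀, v)) (y₀ + v)) (y₀ + v) :=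
        ((hasDerivAt_id _).sub_const _).mul hdiffH.hasDerivAt
      have := h2.const_add (φ (y₀ + v))
      simpa [add_sub_cancel_left] using this
    have hev : (fun x => φ (y₀ + v) + (x - (y₀ + v)) * H (x - y₀, v)) =ᶠ[nhds (y₀ + v)] φ := by
      filter_upwards [Metric.isOpen_ball.mem_nhds hmem] with x hx
      have hx' : ‖x - y₀‖ < r' := by
        simpa [Metric.mem_ball, dist_eq_norm] using hx
      have hh := h1 (x - y₀) v hx' hv
      rw [show y₀ + (x - y₀) = x by ring] at hh
      rw [show x - (y₀ + v) = (x - y₀) - v by ring, hh]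
      ring
    rw [← hev.deriv_eq, hg.deriv]
  have hsym : ∀ u v : ℂ, ‖u‖ < r' → ‖v‖ < r' → H (u, v) = H (v, u) := by
    intro u v hu hv
    refine (hH u v (mem_ball_iff.mpr ⟨hu, hv⟩)).unique ?_
    have := hH v u (mem_ball_iff.mpr ⟨hv, hu⟩)
    rwa [show (fun n => a (n+1) * S v u n) = fun n => a (n+1) * S u v n
      from funext fun n => by rw [S_swap]] at this
  have h2 : ∀ u v : ℂ, ‖u‖ < r' → ‖v‖ < r' →
      (u - v) * K (u, v) = H (v, v) - H (u, v) := by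
    intro u v hu hv
    have hL := hK u v (mem_ball_iff.mpr ⟨hu, hv⟩)
    have hd := (hH v v (mem_ball_iff.mpr ⟨hv, hv⟩)).sub (hH u v (mem_ball_iff.mpr ⟨hu, hv⟩))
    have hshift : HasSum (fun n => a (n+1+1) * S v v (n+1) - a (n+1+1) * S u v (n+1))
        (H (v, v) - H (u, v)) := by
      refine (hasSum_nat_add_iff
        (f := fun n => a (n+1) * S v v n - a (n+1) * S u v n) 1).mpr ?_
      simpa [S_zero] using hd
    have e : (fun n => a (n+1+1) * S v v (n+1) - a (n+1+1) * S u v (n+1))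
        = fun n => (u - v) * -(a (n+2) * T u v n) := funext fun n => by
      rw [S_key u v n, S_key v v n]; ring
    rw [e] at hshift
    exact hL.unique hshift
  have h4 : ∀ v : ℂ, ‖v‖ < r' → deriv (deriv φ) (y₀ + v) = -(2 * K (v, v)) := by
    intro v hv
    have hvv := mem_ball_iff.mpr ⟨hv, hv⟩
    have hHd : HasFDerivAt H (fderiv ℂ H (v, v)) (v, v) :=
      (HanH (v, v) hvv).differentiableAt.hasFDerivAt
    set DH := fderiv ℂ H (v, v) with hDHdef
    have hf1 : HasDerivAt (fun u : ℂ => (u, v)) ((1:ℂ), (0:ℂ)) v :=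
      (hasDerivAt_id v).prodMk (hasDerivAt_const v v)
    have hH1 : HasDerivAt (fun u : ℂ => H (u, v)) (DH (1, 0)) v :=
      HasFDerivAt.comp_hasDerivAt (f := fun u : ℂ => (u, v)) v hHd hf1
    have hf2 : HasDerivAt (fun u : ℂ => (v, u)) ((0:ℂ), (1:ℂ)) v :=
      (hasDerivAt_const v v).prodMk (hasDerivAt_id v)
    have hH2 : HasDerivAt (fun u : ℂ => H (v, u)) (DH (0, 1)) v :=
      HasFDerivAt.comp_hasDerivAt (f := fun u : ℂ => (v, u)) v hHd hf2
    have hball : v ∈ Metric.ball (0:ℂ) (r':ℝ) := by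
      rw [mem_ball_zero_iff]; exact hv
    have hKdiff : DifferentiableAt ℂ (fun u : ℂ => K (u, v)) v :=
      DifferentiableAt.comp (g := K) (f := fun u : ℂ => (u, v)) v
        (HanK (v, v) hvv).differentiableAt
        (differentiableAt_id.prodMk (differentiableAt_const v))
    have hRd : HasDerivAt (fun u : ℂ => H (v, v) - (u - v) * K (u, v)) (-(K (v, v))) v := by
      have h2' : HasDerivAt (fun u : ℂ => (u - v) * K (u, v))
          (1 * K (v, v) + (v - v) * deriv (fun u => K (u, v)) v) v :=
        ((hasDerivAt_id v).sub_const v).mul hKdiff.hasDerivAt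
      have := h2'.const_sub (H (v, v))
      simpa using this
    have hev1 : (fun u : ℂ => H (v, v) - (u - v) * K (u, v)) =ᶠ[nhds v]
        (fun u => H (u, v)) := by
      filter_upwards [Metric.isOpen_ball.mem_nhds hball] with u hu
      have hu' : ‖u‖ < r' := by rwa [mem_ball_zero_iff] at hu
      have hh := h2 u v hu' hv
      linear_combination -hh
    have hD10 : DH (1, 0) = -(K (v, v)) := by
      rw [← hH1.deriv, ← hev1.deriv_eq, hRd.deriv]
    have hD01 : DH (0, 1) = DH (1, 0) := by
      have hev2 : (fun u : ℂ => H (v, u)) =ᶠ[nhds v] (fun u => H (u, v)) := by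
        filter_upwards [Metric.isOpen_ball.mem_nhds hball] with u hu
        exact hsym v u hv (by rwa [mem_ball_zero_iff] at hu)
      rw [← hH2.deriv, ← hH1.deriv]
      exact hev2.deriv_eq
    have hevd : deriv φ =ᶠ[nhds (y₀ + v)] (fun x => H (x - y₀, x - y₀)) := by
      have hmem : y₀ + v ∈ Metric.ball y₀ (r':ℝ) := by
        simp only [Metric.mem_ball, dist_eq_norm, add_sub_cancel_left]; exact hv
      filter_upwards [Metric.isOpen_ball.mem_nhds hmem] with x hx
      have hx' : ‖x - y₀‖ < r' := by simpa [Metric.mem_ball, dist_eq_norm] using hx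
      have hh := h3 (x - y₀) hx'
      rwa [show y₀ + (x - y₀) = x by ring] at hh
    have hdiag : HasDerivAt (fun x : ℂ => H (x - y₀, x - y₀)) (DH (1, 1)) (y₀ + v) := by
      have hf : HasDerivAt (fun x : ℂ => (x - y₀, x - y₀)) ((1:ℂ), (1:ℂ)) (y₀ + v) :=
        ((hasDerivAt_id _).sub_const y₀).prodMk ((hasDerivAt_id _).sub_const y₀)
      have hHd' : HasFDerivAt H DH ((y₀ + v) - y₀, (y₀ + v) - y₀) := by
        rw [add_sub_cancel_left]; exact hHd
      exact HasFDerivAt.comp_hasDerivAt (f := fun x : ℂ => (x - y₀, x - y₀)) (y₀ + v) hHd' hf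
    have h11 : DH (1, 1) = -(2 * K (v, v)) := by
      have e : ((1:ℂ), (1:ℂ)) = ((1:ℂ), (0:ℂ)) + ((0:ℂ), (1:ℂ)) := by simp
      rw [e, map_add, hD01, hD10]; ring
    rw [hevd.deriv_eq, hdiag.deriv, h11]
  -- assembly
  refine ⟨{z : ℂ × ℂ | (z.1 - y₀, z.2 - y₀) ∈ EMetric.ball (0 : ℂ × ℂ) (r' : ℝ≥0∞)
      ∧ H (z.1 - y₀, z.2 - y₀) ≠ 0},
    fun z => K (z.1 - y₀, z.2 - y₀) / H (z.1 - y₀, z.2 - y₀), ?_, ?_, ?_, ?_⟩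
  · -- neighborhood
    have hτ : Continuous fun z : ℂ × ℂ => (z.1 - y₀, z.2 - y₀) := by fun_prop
    have hin : IsOpen (EMetric.ball (0 : ℂ × ℂ) (r' : ℝ≥0∞) ∩ H ⁻¹' {(0:ℂ)}ᶜ) :=
      HanH.continuousOn.isOpen_inter_preimage EMetric.isOpen_ball isOpen_compl_singleton
    have hopen : IsOpen {z : ℂ × ℂ | (z.1 - y₀, z.2 - y₀) ∈ EMetric.ball (0 : ℂ × ℂ) (r' : ℝ≥0∞)
        ∧ H (z.1 - y₀, z.2 - y₀) ≠ 0} := by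
      have e : {z : ℂ × ℂ | (z.1 - y₀, z.2 - y₀) ∈ EMetric.ball (0 : ℂ × ℂ) (r' : ℝ≥0∞)
          ∧ H (z.1 - y₀, z.2 - y₀) ≠ 0}
          = (fun z : ℂ × ℂ => (z.1 - y₀, z.2 - y₀)) ⁻¹'
            (EMetric.ball (0 : ℂ × ℂ) (r' : ℝ≥0∞) ∩ H ⁻¹' {(0:ℂ)}ᶜ) := by
        ext z
        simp [Set.mem_inter_iff, Set.mem_preimage]
      rw [e]
      exact hin.preimage hτ
    refine hopen.mem_nhds ?_
    have h00 : H (0, 0) = deriv φ y₀ := by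
      have := h3 0 (by simpa using hr'0R)
      simpa using this.symm
    constructor
    · simp only [sub_self]
      exact mem_ball_iff.mpr ⟨by simpa using hr'0R, by simpa using hr'0R⟩
    · simp only [sub_self]
      rw [h00]; exact hφ'
  · -- analyticity
    rintro z ⟨hzb, hz0⟩
    have hτa : AnalyticAt ℂ (fun z : ℂ × ℂ => (z.1 - y₀, z.2 - y₀)) z :=
      (analyticAt_fst.sub analyticAt_const).prod (analyticAt_snd.sub analyticAt_const)
    exact (AnalyticAt.comp (g := K) (f := fun z : ℂ × ℂ => (z.1 - y₀, z.2 - y₀)) (HanK _ hzb) hτa).div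
      (AnalyticAt.comp (g := H) (f := fun z : ℂ × ℂ => (z.1 - y₀, z.2 - y₀)) (HanH _ hzb) hτa) hz0
  · -- off-diagonal formula
    rintro z ⟨hzb, hz0⟩ hne
    obtain ⟨hu, hv⟩ := mem_ball_iff.mp hzb
    have huv : z.1 - y₀ - (z.2 - y₀) ≠ 0 := by
      rw [show z.1 - y₀ - (z.2 - y₀) = z.1 - z.2 by ring]
      exact sub_ne_zero.mpr hne
    have hφd : φ z.1 - φ z.2 = (z.1 - y₀ - (z.2 - y₀)) * H (z.1 - y₀, z.2 - y₀) := by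
      have hh := h1 (z.1 - y₀) (z.2 - y₀) hu hv
      rw [show y₀ + (z.1 - y₀) = z.1 by ring, show y₀ + (z.2 - y₀) = z.2 by ring] at hh
      exact hh.symm
    have hder : deriv φ z.2 = H (z.2 - y₀, z.2 - y₀) := by
      have hh := h3 (z.2 - y₀) hv
      rwa [show y₀ + (z.2 - y₀) = z.2 by ring] at hh
    have hK2 := h2 (z.1 - y₀) (z.2 - y₀) hu hv
    show K (z.1 - y₀, z.2 - y₀) / H (z.1 - y₀, z.2 - y₀) = _
    rw [hφd, hder, show z.1 - z.2 = z.1 - y₀ - (z.2 - y₀) by ring]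
    set d := z.1 - y₀ - (z.2 - y₀) with hdd
    set A := H (z.1 - y₀, z.2 - y₀) with hA
    set B := H (z.2 - y₀, z.2 - y₀) with hB
    set Kv := K (z.1 - y₀, z.2 - y₀) with hKv
    field_simp
    linear_combination hK2
  · -- diagonal value
    rintro y ⟨hzb, hz0⟩
    obtain ⟨hv, -⟩ := mem_ball_iff.mp hzb
    have hder : deriv φ y = H (y - y₀, y - y₀) := by
      have hh := h3 (y - y₀) hv
      rwa [show y₀ + (y - y₀) = y by ring] at hh
    have hder2 : deriv (deriv φ) y = -(2 * K (y - y₀, y - y₀)) := by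
      have hh := h4 (y - y₀) hv
      rwa [show y₀ + (y - y₀) = y by ring] at hh
    have hH0 : H (y - y₀, y - y₀) ≠ 0 := hz0
    show K (y - y₀, y - y₀) / H (y - y₀, y - y₀) = _
    rw [hder, hder2]
    field_simp
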